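/- Finite-blocklength worst-case converse (Theorem 1): Consider any zero-error coded caching scheme with common delivery alphabet, i.e., positive integers N, K, F, a real M ≥ 0, messages W_1,…,W_N i.i.d. uniform on {1,…,2^F}, cache values V_k = g_k(W_1,…,W_N) for k ∈ {1,…,K} where each g_k maps into a set of size at most ⌊2^{F·M}⌋, a single finite delivery alphabet 𝒳, for every demand vector d ∈ {1,…,N}^K a delivery symbol X_d = f_d(W_1,…,W_N) ∈ 𝒳, and decoders φ_{k,d} with φ_{k,d}(X_d, V_k) = W_{d_k} for every realization of (W_1,…,W_N), every k ∈ {1,…,K}, and every d ∈ {1,…,N}^K. Then for every ℓ ∈ {1,…,min(K,N)}: log₂|𝒳| ≥ F·(ℓ − M·ℓ²/N) and log₂|𝒳| ≥ F·(ℓ − M·∑_{k=1}^{ℓ} k/(N−k+1)). (Letting F → ∞ this yields the paper's asymptotic bound R*_worst(M) ≥ R^low_worst(M).) -/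

import Mathlib

open Finset Real
set_option linter.unusedSectionVars false
noncomputable section
namespace CC

variable {Ω : Type} [Fintype Ω] [Nonempty Ω] {α β γ : Type}

open Classical in
/-- size of the fiber of `f` containing `ω` -/
def fib (f : Ω → α) (ω : Ω) : ℕ := #(univ.filter fun ω' => f ω' = f ω)

open Classical in
lemma fib_pos (f : Ω → α) (ω : Ω) : 0 < fib f ω :=
  Finset.card_pos.2 ⟨ω, Finset.mem_filter.2 ⟨Finset.mem_univ ω, rfl⟩⟩

open Classical in
lemma fib_le_card (f : Ω → α) (ω : Ω) : fib f ω ≤ Fintype.card Ω :=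
  Finset.card_filter_le _ _

lemma fib_pos' (f : Ω → α) (ω : Ω) : (0:ℝ) < (fib f ω : ℝ) := by
  exact_mod_cast fib_pos f ω

/-- unnormalized entropy: `|Ω| * H(f)` measured in nats -/
def ent (f : Ω → α) : ℝ := ∑ ω, Real.log ((Fintype.card Ω : ℝ) / (fib f ω))

lemma card_pos' : (0:ℝ) < (Fintype.card Ω : ℝ) := by
  exact_mod_cast Fintype.card_pos

lemma ent_term_nonneg (f : Ω → α) (ω : Ω) :
    0 ≤ Real.log ((Fintype.card Ω : ℝ) / (fib f ω)) := by
  apply Real.log_nonneg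
  rw [le_div_iff₀ (fib_pos' f ω)]
  simpa using (by exact_mod_cast fib_le_card f ω : (fib f ω : ℝ) ≤ Fintype.card Ω)

lemma ent_nonneg (f : Ω → α) : 0 ≤ ent f :=
  Finset.sum_nonneg fun ω _ => ent_term_nonneg f ω

open Classical in
lemma fib_mono {f : Ω → α} {g : Ω → β}
    (h : ∀ ω₁ ω₂, f ω₁ = f ω₂ → g ω₁ = g ω₂) (ω : Ω) : fib f ω ≤ fib g ω := by
  apply Finset.card_le_card
  intro ω' hω'
  rw [Finset.mem_filter] at *
  exact ⟨hω'.1, h _ _ hω'.2⟩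

/-- if `f` determines `g` (i.e. `f` is finer), then `ent g ≤ ent f` -/
lemma ent_mono {f : Ω → α} {g : Ω → β}
    (h : ∀ ω₁ ω₂, f ω₁ = f ω₂ → g ω₁ = g ω₂) : ent g ≤ ent f := by
  apply Finset.sum_le_sum
  intro ω _
  apply Real.log_le_log (div_pos card_pos' (fib_pos' g _))
  apply div_le_div_of_nonneg_left (le_of_lt card_pos') (fib_pos' f ω)
  exact_mod_cast fib_mono h ω

lemma ent_congr {f : Ω → α} {g : Ω → β}
    (h1 : ∀ ω₁ ω₂, f ω₁ = f ω₂ → g ω₁ = g ω₂)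
    (h2 : ∀ ω₁ ω₂, g ω₁ = g ω₂ → f ω₁ = f ω₂) : ent f = ent g :=
  le_antisymm (ent_mono h2) (ent_mono h1)

open Classical in
lemma fib_eq_of_eq {f : Ω → α} {ω ω' : Ω} (h : f ω' = f ω) : fib f ω' = fib f ω := by
  unfold fib
  congr 1
  apply Finset.filter_congr
  intro x _
  rw [h]

open Classical in
lemma sum_inv_fib (f : Ω → α) :
    ∑ ω, ((fib f ω : ℝ))⁻¹ = #(univ.image f) := by
  classical
  rw [← Finset.sum_fiberwise_of_maps_to (t := univ.image f)
    (fun ω _ => Finset.mem_image_of_mem f (Finset.mem_univ ω)) (fun ω => ((fib f ω : ℝ))⁻¹)]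
  rw [Finset.card_eq_sum_ones (univ.image f)]
  push_cast
  apply Finset.sum_congr rfl
  intro y hy
  obtain ⟨ω₀, -, rfl⟩ := Finset.mem_image.1 hy
  have hconst : ∀ ω' ∈ univ.filter (fun ω => f ω = f ω₀), ((fib f ω' : ℝ))⁻¹ = ((fib f ω₀ : ℝ))⁻¹ := by
    intro ω' hω'
    rw [Finset.mem_filter] at hω'
    rw [fib_eq_of_eq hω'.2]
  rw [Finset.sum_congr rfl hconst, Finset.sum_const, nsmul_eq_mul]
  have : #(univ.filter fun ω => f ω = f ω₀) = fib f ω₀ := rfl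
  rw [this, mul_inv_cancel₀ (by exact_mod_cast (fib_pos f ω₀).ne')]

open Classical in
/-- entropy is at most log of the number of distinct values -/
lemma ent_le_log_image (f : Ω → α) :
    ent f ≤ (Fintype.card Ω : ℝ) * Real.log (#(univ.image f)) := by
  classical
  have himg : (0:ℝ) < (#(univ.image f) : ℝ) := by
    have : (Finset.univ.image f).Nonempty := ⟨f (Classical.arbitrary Ω), Finset.mem_image_of_mem f (Finset.mem_univ _)⟩
    exact_mod_cast Finset.card_pos.2 this
  set c : ℝ := (Fintype.card Ω : ℝ) with hc
  set m : ℝ := (#(univ.image f) : ℝ)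
  have hcpos : (0:ℝ) < c := card_pos'
  have key : ent f - c * Real.log m ≤ 0 := by
    have h1 : ent f - c * Real.log m = ∑ ω, Real.log (c / (fib f ω * m)) := by
      unfold ent
      rw [eq_comm]
      have hterm : ∀ ω : Ω, Real.log (c / (fib f ω * m))
          = Real.log (c / (fib f ω)) - Real.log m := by
        intro ω
        rw [Real.log_div hcpos.ne' (mul_pos (fib_pos' f ω) himg).ne', Real.log_mul (fib_pos' f ω).ne' himg.ne',
          Real.log_div hcpos.ne' (fib_pos' f ω).ne']
        ring
      rw [Finset.sum_congr rfl (fun ω _ => hterm ω), Finset.sum_sub_distrib,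
        Finset.sum_const, Finset.card_univ, nsmul_eq_mul]
    rw [h1]
    have h2 : ∑ ω, Real.log (c / (fib f ω * m)) ≤ ∑ ω : Ω, (c / (fib f ω * m) - 1) := by
      apply Finset.sum_le_sum
      intro ω _
      exact Real.log_le_sub_one_of_pos (div_pos hcpos (mul_pos (fib_pos' f ω) himg))
    have h3 : ∑ ω : Ω, (c / (fib f ω * m) - 1) = 0 := by
      rw [Finset.sum_sub_distrib, Finset.sum_const, Finset.card_univ, nsmul_eq_mul, mul_one]
      have : ∀ ω : Ω, c / (fib f ω * m) = (c/m) * ((fib f ω : ℝ))⁻¹ := by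
        intro ω; field_simp
      rw [Finset.sum_congr rfl (fun ω _ => this ω), ← Finset.mul_sum, sum_inv_fib]
      field_simp
      have hm : m = (#(univ.image f) : ℝ) := rfl
      rw [hc, hm]; ring
    linarith
  linarith

open Classical in
lemma fib_eq_filter {f : Ω → α} {ω : Ω} {p : Ω → Prop} [DecidablePred p]
    (hp : ∀ ω', f ω' = f ω ↔ p ω') : fib f ω = #(univ.filter p) := by
  unfold fib
  congr 1
  ext x
  simp only [Finset.mem_filter, Finset.mem_univ, true_and]
  exact hp x

open Classical in
lemma ent_le_log_fintype_of_inj {β : Type} [Fintype β] (f : Ω → α) (e : α → β)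
    (he : ∀ ω₁ ω₂, e (f ω₁) = e (f ω₂) → f ω₁ = f ω₂) :
    ent f ≤ (Fintype.card Ω : ℝ) * Real.log (Fintype.card β) := by
  refine (ent_le_log_image f).trans ?_
  apply mul_le_mul_of_nonneg_left ?_ card_pos'.le
  have h1 : (univ.image f).image e = univ.image (fun ω => e (f ω)) := by
    rw [Finset.image_image]
    rfl
  have h2 : #((univ.image f).image e) = #(univ.image f) := by
    apply Finset.card_image_of_injOn
    intro a ha b hb hab
    obtain ⟨ωa, -, rfl⟩ := Finset.mem_image.1 ha
    obtain ⟨ωb, -, rfl⟩ := Finset.mem_image.1 hb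
    exact he ωa ωb hab
  have himg : #(univ.image f) ≤ Fintype.card β := by
    rw [← h2]
    have := Finset.card_le_univ ((univ.image f).image e)
    simpa using this
  have hpos : (0 : ℝ) < (#(univ.image f) : ℝ) := by
    have : (univ.image f).Nonempty :=
      ⟨f (Classical.arbitrary Ω), Finset.mem_image_of_mem f (Finset.mem_univ _)⟩
    exact_mod_cast Finset.card_pos.2 this
  exact Real.log_le_log hpos (by exact_mod_cast himg)
end CC

namespace CC
variable {Ω : Type} [Fintype Ω] [Nonempty Ω] {α β γ : Type}

open Classical in
/-- Submodularity of entropy: `H(g) + H(f,g,h) ≤ H(f,g) + H(g,h)`. -/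
lemma ent_submod (f : Ω → α) (g : Ω → β) (h : Ω → γ) :
    ent g + ent (fun ω => (f ω, g ω, h ω)) ≤ ent (fun ω => (f ω, g ω)) + ent (fun ω => (g ω, h ω)) := by
  classical
  set c : ℝ := (Fintype.card Ω : ℝ) with hc
  have hcpos : (0:ℝ) < c := card_pos'
  set p12 : Ω → α × β := fun ω => (f ω, g ω) with hp12
  set p23 : Ω → β × γ := fun ω => (g ω, h ω) with hp23
  set p123 : Ω → α × β × γ := fun ω => (f ω, g ω, h ω) with hp123
  have fib12 : ∀ ω, fib p12 ω = #(univ.filter fun ω' => f ω' = f ω ∧ g ω' = g ω) := by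
    intro ω; unfold fib; congr 1
    ext x; simp [hp12, Prod.ext_iff]
  have fib23 : ∀ ω, fib p23 ω = #(univ.filter fun ω' => g ω' = g ω ∧ h ω' = h ω) := by
    intro ω; unfold fib; congr 1
    ext x; simp [hp23, Prod.ext_iff]
  have fib123 : ∀ ω, fib p123 ω = #(univ.filter fun ω' => f ω' = f ω ∧ g ω' = g ω ∧ h ω' = h ω) := by
    intro ω; unfold fib; congr 1
    ext x; simp [hp123, Prod.ext_iff, and_assoc]
  -- the counting bound
  have key : ∑ ω, ((fib p12 ω : ℝ) * (fib p23 ω)) / ((fib g ω : ℝ) * (fib p123 ω)) ≤ c := by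
    have hrw : ∀ ω : Ω, ((fib p12 ω : ℝ) * (fib p23 ω)) / ((fib g ω : ℝ) * (fib p123 ω))
        = ∑ ω₁ : Ω, ∑ ω₂ : Ω,
            (if f ω₁ = f ω ∧ g ω₁ = g ω then (1:ℝ) else 0)
            * (if g ω₂ = g ω ∧ h ω₂ = h ω then (1:ℝ) else 0)
            / ((fib g ω : ℝ) * (fib p123 ω)) := by
      intro ω
      have h1 : ((fib p12 ω : ℝ)) = ∑ ω₁ : Ω, (if f ω₁ = f ω ∧ g ω₁ = g ω then (1:ℝ) else 0) := by
        rw [Finset.sum_boole, fib12]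
      have h2 : ((fib p23 ω : ℝ)) = ∑ ω₂ : Ω, (if g ω₂ = g ω ∧ h ω₂ = h ω then (1:ℝ) else 0) := by
        rw [Finset.sum_boole, fib23]
      rw [h1, h2, Finset.sum_mul_sum]
      rw [Finset.sum_div]
      apply Finset.sum_congr rfl; intro ω₁ _
      rw [Finset.sum_div]
    calc ∑ ω, ((fib p12 ω : ℝ) * (fib p23 ω)) / ((fib g ω : ℝ) * (fib p123 ω))
        = ∑ ω₁ : Ω, ∑ ω₂ : Ω, ∑ ω : Ω,
            (if f ω₁ = f ω ∧ g ω₁ = g ω then (1:ℝ) else 0)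
            * (if g ω₂ = g ω ∧ h ω₂ = h ω then (1:ℝ) else 0)
            / ((fib g ω : ℝ) * (fib p123 ω)) := by
          rw [Finset.sum_congr rfl (fun ω _ => hrw ω)]
          rw [Finset.sum_comm]
          apply Finset.sum_congr rfl; intro ω₁ _
          rw [Finset.sum_comm]
      _ ≤ ∑ ω₁ : Ω, ∑ ω₂ : Ω, (if g ω₁ = g ω₂ then ((fib g ω₁ : ℝ))⁻¹ else 0) := by
          apply Finset.sum_le_sum; intro ω₁ _
          apply Finset.sum_le_sum; intro ω₂ _
          by_cases hgg : g ω₁ = g ω₂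
          · rw [if_pos hgg]
            set A : Finset Ω := univ.filter (fun ω => f ω₁ = f ω ∧ g ω₁ = g ω ∧ h ω₂ = h ω) with hA
            have hzero : ∀ ω ∈ (univ : Finset Ω), ω ∉ A →
                (if f ω₁ = f ω ∧ g ω₁ = g ω then (1:ℝ) else 0)
                * (if g ω₂ = g ω ∧ h ω₂ = h ω then (1:ℝ) else 0)
                / ((fib g ω : ℝ) * (fib p123 ω)) = 0 := by
              intro ω _ hωA
              rw [hA, Finset.mem_filter] at hωA
              push_neg at hωA
              by_cases c1 : f ω₁ = f ω ∧ g ω₁ = g ω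
              · by_cases c2 : g ω₂ = g ω ∧ h ω₂ = h ω
                · exact absurd c2.2 (hωA (Finset.mem_univ ω) c1.1 c1.2)
                · rw [if_neg c2]; ring
              · rw [if_neg c1]; ring
            rw [← Finset.sum_subset (Finset.subset_univ A) hzero]
            have hterm : ∀ ω ∈ A,
                (if f ω₁ = f ω ∧ g ω₁ = g ω then (1:ℝ) else 0)
                * (if g ω₂ = g ω ∧ h ω₂ = h ω then (1:ℝ) else 0)
                / ((fib g ω : ℝ) * (fib p123 ω))
                = ((fib g ω₁ : ℝ) * (#A : ℝ))⁻¹ := by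
              intro ω hω
              rw [hA, Finset.mem_filter] at hω
              obtain ⟨-, hf1, hg1, hh2⟩ := hω
              rw [if_pos ⟨hf1, hg1⟩, if_pos ⟨hgg.symm.trans hg1, hh2⟩]
              have e1 : fib g ω = fib g ω₁ := fib_eq_of_eq hg1.symm
              have e2 : fib p123 ω = #A := by
                rw [fib123, hA]
                congr 1
                ext x
                simp only [Finset.mem_filter, Finset.mem_univ, true_and]
                constructor
                · rintro ⟨a, b, cc⟩; exact ⟨hf1.trans a.symm, hg1.trans b.symm, hh2.trans cc.symm⟩
                · rintro ⟨a, b, cc⟩; exact ⟨a.symm.trans hf1, b.symm.trans hg1, cc.symm.trans hh2⟩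
              rw [e1, e2, one_mul, one_div]
            rw [Finset.sum_congr rfl hterm, Finset.sum_const, nsmul_eq_mul]
            rcases Nat.eq_zero_or_pos #A with hA0 | hA0
            · rw [hA0]
              simp only [Nat.cast_zero, mul_zero, zero_mul, inv_zero, mul_zero]
              exact inv_nonneg.2 (fib_pos' g ω₁).le
            · rw [mul_inv, ← mul_assoc, mul_comm ((#A:ℝ)) _, mul_assoc]
              rw [mul_inv_cancel₀ (by exact_mod_cast hA0.ne')]
              rw [mul_one]
          · rw [if_neg hgg]
            apply le_of_eq
            apply Finset.sum_eq_zero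
            intro ω _
            by_cases c1 : f ω₁ = f ω ∧ g ω₁ = g ω
            · by_cases c2 : g ω₂ = g ω ∧ h ω₂ = h ω
              · exact absurd (c1.2.trans c2.1.symm) hgg
              · rw [if_neg c2]; ring
            · rw [if_neg c1]; ring
      _ = c := by
          have hin : ∀ ω₁ : Ω, ∑ ω₂ : Ω, (if g ω₁ = g ω₂ then ((fib g ω₁ : ℝ))⁻¹ else 0) = 1 := by
            intro ω₁
            rw [Finset.sum_ite, Finset.sum_const, Finset.sum_const_zero, add_zero, nsmul_eq_mul]
            have hcard : #(univ.filter fun ω₂ => g ω₁ = g ω₂) = fib g ω₁ := by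
              unfold fib; congr 1
              apply Finset.filter_congr; intro x _
              exact (eq_comm : g ω₁ = g x ↔ g x = g ω₁)
            rw [hcard, mul_inv_cancel₀ (fib_pos' g ω₁).ne']
          rw [Finset.sum_congr rfl (fun ω₁ _ => hin ω₁), Finset.sum_const, Finset.card_univ, nsmul_eq_mul, mul_one]
  -- conclude from the counting bound via `log x ≤ x - 1`
  have hterm : ∀ ω : Ω,
      Real.log (c / fib g ω) + Real.log (c / fib p123 ω)
        - Real.log (c / fib p12 ω) - Real.log (c / fib p23 ω)
      = Real.log (((fib p12 ω : ℝ) * fib p23 ω) / ((fib g ω : ℝ) * fib p123 ω)) := by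
    intro ω
    rw [Real.log_div (mul_pos (fib_pos' p12 ω) (fib_pos' p23 ω)).ne' (mul_pos (fib_pos' g ω) (fib_pos' p123 ω)).ne',
      Real.log_mul (fib_pos' p12 ω).ne' (fib_pos' p23 ω).ne',
      Real.log_mul (fib_pos' g ω).ne' (fib_pos' p123 ω).ne',
      Real.log_div hcpos.ne' (fib_pos' g ω).ne',
      Real.log_div hcpos.ne' (fib_pos' p123 ω).ne',
      Real.log_div hcpos.ne' (fib_pos' p12 ω).ne',
      Real.log_div hcpos.ne' (fib_pos' p23 ω).ne']
    ring
  have hsplit : ent g + ent p123 - ent p12 - ent p23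
      = ∑ ω, Real.log (((fib p12 ω : ℝ) * fib p23 ω) / ((fib g ω : ℝ) * fib p123 ω)) := by
    rw [← Finset.sum_congr rfl (fun ω _ => hterm ω)]
    unfold ent
    rw [← Finset.sum_add_distrib, ← Finset.sum_sub_distrib, ← Finset.sum_sub_distrib]
  have hlog : ∑ ω, Real.log (((fib p12 ω : ℝ) * fib p23 ω) / ((fib g ω : ℝ) * fib p123 ω))
      ≤ ∑ ω, (((fib p12 ω : ℝ) * fib p23 ω) / ((fib g ω : ℝ) * fib p123 ω) - 1) := by
    apply Finset.sum_le_sum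
    intro ω _
    exact Real.log_le_sub_one_of_pos
      (div_pos (mul_pos (fib_pos' p12 ω) (fib_pos' p23 ω)) (mul_pos (fib_pos' g ω) (fib_pos' p123 ω)))
  have hsum1 : ∑ ω, (((fib p12 ω : ℝ) * fib p23 ω) / ((fib g ω : ℝ) * fib p123 ω) - 1) ≤ 0 := by
    rw [Finset.sum_sub_distrib, Finset.sum_const, Finset.card_univ, nsmul_eq_mul, mul_one]
    linarith [key]
  linarith [hsplit, hlog, hsum1]
end CC

namespace CC
section App
variable {N K F : ℕ} {V : Fin K → Type} [∀ k, Fintype (V k)] {𝒳 : Type} [Fintype 𝒳]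

instance : Nonempty (Fin N → Fin (2 ^ F)) :=
  ⟨fun _ => ⟨0, by positivity⟩⟩

variable (g : ∀ k : Fin K, (Fin N → Fin (2 ^ F)) → V k)
variable (fd : (Fin K → Fin N) → (Fin N → Fin (2 ^ F)) → 𝒳)

open Classical in
/-- joint observable: messages in `T`, caches in `U`, and (if `b`) the delivery symbol for `d` -/
def obs (d : Fin K → Fin N) (T : Finset (Fin N)) (U : Finset (Fin K)) (b : Bool) :
    (Fin N → Fin (2 ^ F)) → (Fin N → Option (Fin (2 ^ F))) × (∀ k, Option (V k)) × Option 𝒳 :=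
  fun ω => (fun i => if i ∈ T then some (ω i) else none,
            fun k => if k ∈ U then some (g k ω) else none,
            if b then some (fd d ω) else none)

open Classical in
lemma obs_eq_iff (d : Fin K → Fin N) (T : Finset (Fin N)) (U : Finset (Fin K)) (b : Bool)
    (ω₁ ω₂ : Fin N → Fin (2 ^ F)) :
    obs g fd d T U b ω₁ = obs g fd d T U b ω₂ ↔
      ((∀ i ∈ T, ω₁ i = ω₂ i) ∧ (∀ k ∈ U, g k ω₁ = g k ω₂) ∧ (b = true → fd d ω₁ = fd d ω₂)) := by
  unfold obs
  rw [Prod.ext_iff, Prod.ext_iff]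
  simp only [funext_iff]
  constructor
  · rintro ⟨h1, h2, h3⟩
    refine ⟨?_, ?_, ?_⟩
    · intro i hi; have := h1 i; rw [if_pos hi, if_pos hi] at this
      exact Option.some_injective _ this
    · intro k hk; have := h2 k; rw [if_pos hk, if_pos hk] at this
      exact Option.some_injective _ this
    · intro hb; subst hb; rw [if_pos rfl, if_pos rfl] at h3
      exact Option.some_injective _ h3
  · rintro ⟨h1, h2, h3⟩
    refine ⟨?_, ?_, ?_⟩
    · intro i; by_cases hi : i ∈ T
      · rw [if_pos hi, if_pos hi, h1 i hi]
      · rw [if_neg hi, if_neg hi]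
    · intro k; by_cases hk : k ∈ U
      · rw [if_pos hk, if_pos hk, h2 k hk]
      · rw [if_neg hk, if_neg hk]
    · cases b
      · rfl
      · rw [if_pos rfl, if_pos rfl, h3 rfl]

/-- entropy of the joint observable (unnormalized) -/
def EH (d : Fin K → Fin N) (T : Finset (Fin N)) (U : Finset (Fin K)) (b : Bool) : ℝ :=
  ent (obs g fd d T U b)

lemma obs_determines (d : Fin K → Fin N) {T T' : Finset (Fin N)} {U U' : Finset (Fin K)}
    {b b' : Bool} (hT : T ⊆ T') (hU : U ⊆ U') (hb : b = true → b' = true)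
    {ω₁ ω₂ : Fin N → Fin (2 ^ F)}
    (hyp : obs g fd d T' U' b' ω₁ = obs g fd d T' U' b' ω₂) :
    obs g fd d T U b ω₁ = obs g fd d T U b ω₂ := by
  rw [obs_eq_iff] at hyp ⊢
  exact ⟨fun i hi => hyp.1 i (hT hi), fun k hk => hyp.2.1 k (hU hk),
    fun hbt => hyp.2.2 (hb hbt)⟩

lemma EH_mono (d : Fin K → Fin N) {T T' : Finset (Fin N)} {U U' : Finset (Fin K)}
    {b b' : Bool} (hT : T ⊆ T') (hU : U ⊆ U') (hb : b = true → b' = true) :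
    EH g fd d T U b ≤ EH g fd d T' U' b' :=
  ent_mono (fun _ _ hyp => obs_determines g fd d hT hU hb hyp)

lemma EH_pair_bridge (d : Fin K → Fin N) (T₁ T₂ : Finset (Fin N)) (U₁ U₂ : Finset (Fin K))
    (b₁ b₂ : Bool) :
    ent (fun ω => (obs g fd d T₁ U₁ b₁ ω, obs g fd d T₂ U₂ b₂ ω))
      = EH g fd d (T₁ ∪ T₂) (U₁ ∪ U₂) (b₁ || b₂) := by
  apply ent_congr
  · intro ω₁ ω₂ hyp
    have h1 : obs g fd d T₁ U₁ b₁ ω₁ = obs g fd d T₁ U₁ b₁ ω₂ :=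
      congrArg Prod.fst hyp
    have h2 : obs g fd d T₂ U₂ b₂ ω₁ = obs g fd d T₂ U₂ b₂ ω₂ :=
      congrArg Prod.snd hyp
    rw [obs_eq_iff] at h1 h2 ⊢
    obtain ⟨a1, a2, a3⟩ := h1
    obtain ⟨c1, c2, c3⟩ := h2
    refine ⟨?_, ?_, ?_⟩
    · intro i hi; rcases Finset.mem_union.1 hi with h | h
      exacts [a1 i h, c1 i h]
    · intro k hk; rcases Finset.mem_union.1 hk with h | h
      exacts [a2 k h, c2 k h]
    · intro hb; simp only [Bool.or_eq_true] at hb; rcases hb with h | h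
      exacts [a3 h, c3 h]
  · intro ω₁ ω₂ hyp
    exact congrArg₂ Prod.mk
      (obs_determines g fd d Finset.subset_union_left Finset.subset_union_left
        (fun h => by simp [h]) hyp)
      (obs_determines g fd d Finset.subset_union_right Finset.subset_union_right
        (fun h => by simp [h]) hyp)

lemma EH_triple_bridge (d : Fin K → Fin N) (T₁ T₂ T₃ : Finset (Fin N))
    (U₁ U₂ U₃ : Finset (Fin K)) (b₁ b₂ b₃ : Bool) :
    ent (fun ω => (obs g fd d T₁ U₁ b₁ ω, obs g fd d T₂ U₂ b₂ ω, obs g fd d T₃ U₃ b₃ ω))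
      = EH g fd d (T₁ ∪ T₂ ∪ T₃) (U₁ ∪ U₂ ∪ U₃) (b₁ || b₂ || b₃) := by
  apply ent_congr
  · intro ω₁ ω₂ hyp
    have h1 : obs g fd d T₁ U₁ b₁ ω₁ = obs g fd d T₁ U₁ b₁ ω₂ :=
      congrArg Prod.fst hyp
    have h2 : obs g fd d T₂ U₂ b₂ ω₁ = obs g fd d T₂ U₂ b₂ ω₂ :=
      congrArg (fun p => p.2.1) hyp
    have h3 : obs g fd d T₃ U₃ b₃ ω₁ = obs g fd d T₃ U₃ b₃ ω₂ :=
      congrArg (fun p => p.2.2) hyp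
    rw [obs_eq_iff] at h1 h2 h3 ⊢
    obtain ⟨a1, a2, a3⟩ := h1
    obtain ⟨c1, c2, c3⟩ := h2
    obtain ⟨e1, e2, e3⟩ := h3
    refine ⟨?_, ?_, ?_⟩
    · intro i hi
      rcases Finset.mem_union.1 hi with h | h
      · rcases Finset.mem_union.1 h with h' | h'
        exacts [a1 i h', c1 i h']
      · exact e1 i h
    · intro k hk
      rcases Finset.mem_union.1 hk with h | h
      · rcases Finset.mem_union.1 h with h' | h'
        exacts [a2 k h', c2 k h']
      · exact e2 k h
    · intro hb; simp only [Bool.or_eq_true] at hb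
      rcases hb with (h | h) | h
      exacts [a3 h, c3 h, e3 h]
  · intro ω₁ ω₂ hyp
    exact congrArg₂ Prod.mk
      (obs_determines g fd d (Finset.subset_union_left.trans Finset.subset_union_left)
        (Finset.subset_union_left.trans Finset.subset_union_left)
        (fun h => by simp [h]) hyp)
      (congrArg₂ Prod.mk
        (obs_determines g fd d (Finset.subset_union_right.trans Finset.subset_union_left)
          (Finset.subset_union_right.trans Finset.subset_union_left)
          (fun h => by simp [h]) hyp)
        (obs_determines g fd d Finset.subset_union_right Finset.subset_union_right
          (fun h => by simp [h]) hyp))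

/-- submodularity for joint observables -/
lemma EH_submod (d : Fin K → Fin N) (T₁ T₂ T₃ : Finset (Fin N))
    (U₁ U₂ U₃ : Finset (Fin K)) (b₁ b₂ b₃ : Bool) :
    EH g fd d T₂ U₂ b₂ + EH g fd d (T₁ ∪ T₂ ∪ T₃) (U₁ ∪ U₂ ∪ U₃) (b₁ || b₂ || b₃)
      ≤ EH g fd d (T₁ ∪ T₂) (U₁ ∪ U₂) (b₁ || b₂) + EH g fd d (T₂ ∪ T₃) (U₂ ∪ U₃) (b₂ || b₃) := by
  have h := ent_submod (obs g fd d T₁ U₁ b₁) (obs g fd d T₂ U₂ b₂) (obs g fd d T₃ U₃ b₃)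
  rw [EH_pair_bridge, EH_pair_bridge, EH_triple_bridge] at h
  exact h

end App
end CC

namespace CC
section App2
variable {N K F : ℕ} {V : Fin K → Type} [∀ k, Fintype (V k)] {𝒳 : Type} [Fintype 𝒳]
variable (g : ∀ k : Fin K, (Fin N → Fin (2 ^ F)) → V k)
variable (fd : (Fin K → Fin N) → (Fin N → Fin (2 ^ F)) → 𝒳)

open Classical in
lemma fib_obs_messages (d : Fin K → Fin N) (T : Finset (Fin N)) (ω : Fin N → Fin (2 ^ F)) :
    fib (obs g fd d T ∅ false) ω = (2 ^ F) ^ (N - T.card) := by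
  classical
  have hiff : ∀ ω', obs g fd d T ∅ false ω' = obs g fd d T ∅ false ω ↔ (∀ i ∈ T, ω' i = ω i) := by
    intro ω'
    rw [obs_eq_iff]
    simp
  rw [fib_eq_filter hiff, ← Fintype.card_subtype]
  have hcongr : Fintype.card {ω' : Fin N → Fin (2 ^ F) // ∀ i ∈ T, ω' i = ω i}
      = ∏ i : Fin N, Fintype.card {x : Fin (2 ^ F) // i ∈ T → x = ω i} := by
    rw [Fintype.card_congr (Equiv.subtypePiEquivPi (p := fun i x => i ∈ T → x = ω i)),
      Fintype.card_pi]
  rw [hcongr]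
  have hper : ∀ i : Fin N, Fintype.card {x : Fin (2 ^ F) // i ∈ T → x = ω i}
      = if i ∈ T then 1 else 2 ^ F := by
    intro i
    by_cases hi : i ∈ T
    · rw [if_pos hi]
      have hiffx : ∀ x : Fin (2 ^ F), (i ∈ T → x = ω i) ↔ (x = ω i) := fun x => by simp [hi]
      rw [Fintype.card_congr (Equiv.subtypeEquivRight hiffx)]
      exact Fintype.card_subtype_eq (ω i)
    · rw [if_neg hi, Fintype.card_congr (Equiv.subtypeUnivEquiv (fun x h => absurd h hi))]
      simp
  rw [Finset.prod_congr rfl (fun i _ => hper i), Finset.prod_ite, Finset.prod_const,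
    Finset.prod_const, one_pow, one_mul]
  congr 1
  have : (univ.filter fun i => ¬ i ∈ T) = Tᶜ := by
    ext x; simp
  rw [this, Finset.card_compl]
  simp

open Classical in
lemma EH_messages (d : Fin K → Fin N) (T : Finset (Fin N)) :
    EH g fd d T ∅ false
      = (Fintype.card (Fin N → Fin (2 ^ F)) : ℝ) * ((T.card : ℝ) * ((F : ℝ) * Real.log 2)) := by
  classical
  have hcard : Fintype.card (Fin N → Fin (2 ^ F)) = (2 ^ F) ^ N := by
    rw [Fintype.card_fun]
    simp
  have hTle : T.card ≤ N := by
    have := Finset.card_le_univ T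
    simpa using this
  unfold EH ent
  have hterm : ∀ ω : Fin N → Fin (2 ^ F),
      Real.log ((Fintype.card (Fin N → Fin (2 ^ F)) : ℝ) / (fib (obs g fd d T ∅ false) ω))
        = (T.card : ℝ) * ((F : ℝ) * Real.log 2) := by
    intro ω
    rw [fib_obs_messages, hcard]
    have hratio : (((2 ^ F) ^ N : ℕ) : ℝ) / (((2 ^ F) ^ (N - T.card) : ℕ) : ℝ)
        = ((2 : ℝ) ^ F) ^ T.card := by
      push_cast
      rw [div_eq_iff (by positivity)]
      rw [← pow_add]
      congr 1
      omega
    rw [hratio, Real.log_pow, Real.log_pow]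
  rw [Finset.sum_congr rfl (fun ω _ => hterm ω), Finset.sum_const, Finset.card_univ,
    nsmul_eq_mul]

lemma EH_decode (φv : ∀ k : Fin K, (Fin K → Fin N) → 𝒳 → V k → Fin (2 ^ F))
    (hdec : ∀ (ω : Fin N → Fin (2 ^ F)) (k : Fin K) (d : Fin K → Fin N),
      φv k d (fd d ω) (g k ω) = ω (d k))
    (d : Fin K → Fin N) (T : Finset (Fin N)) {U : Finset (Fin K)} {k : Fin K} (hk : k ∈ U) :
    EH g fd d (insert (d k) T) U true = EH g fd d T U true := by
  apply ent_congr
  · intro ω₁ ω₂ hyp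
    exact obs_determines g fd d (Finset.subset_insert _ _) (le_refl U) (fun h => h) hyp
  · intro ω₁ ω₂ hyp
    rw [obs_eq_iff] at hyp ⊢
    obtain ⟨a1, a2, a3⟩ := hyp
    refine ⟨?_, a2, a3⟩
    intro i hi
    rcases Finset.mem_insert.1 hi with rfl | hi'
    · calc ω₁ (d k) = φv k d (fd d ω₁) (g k ω₁) := (hdec ω₁ k d).symm
        _ = φv k d (fd d ω₂) (g k ω₂) := by rw [a3 rfl, a2 k hk]
        _ = ω₂ (d k) := hdec ω₂ k d
    · exact a1 i hi'

open Classical in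
lemma EH_cache_single (d : Fin K → Fin N) (j : Fin K) :
    EH g fd d ∅ {j} false
      ≤ (Fintype.card (Fin N → Fin (2 ^ F)) : ℝ) * Real.log (Fintype.card (V j)) := by
  classical
  apply ent_le_log_fintype_of_inj (β := V j) _
    (fun y : (Fin N → Option (Fin (2 ^ F))) × (∀ k, Option (V k)) × Option 𝒳 =>
      (y.2.1 j).getD (g j (Classical.arbitrary _)))
  intro ω₁ ω₂ heq
  have hev : ∀ ω : Fin N → Fin (2 ^ F),
      ((obs g fd d ∅ ({j} : Finset (Fin K)) false ω).2.1 j).getD (g j (Classical.arbitrary _))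
        = g j ω := by
    intro ω
    simp [obs]
  have hg : g j ω₁ = g j ω₂ := by
    rw [hev ω₁, hev ω₂] at heq
    exact heq
  rw [obs_eq_iff]
  refine ⟨by simp, ?_, by simp⟩
  intro k hk
  rcases Finset.mem_singleton.1 hk with rfl
  exact hg

open Classical in
lemma EH_X (d : Fin K → Fin N) :
    EH g fd d ∅ ∅ true
      ≤ (Fintype.card (Fin N → Fin (2 ^ F)) : ℝ) * Real.log (Fintype.card 𝒳) := by
  classical
  apply ent_le_log_fintype_of_inj (β := 𝒳) _
    (fun y : (Fin N → Option (Fin (2 ^ F))) × (∀ k, Option (V k)) × Option 𝒳 =>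
      (y.2.2).getD (fd d (Classical.arbitrary _)))
  intro ω₁ ω₂ heq
  have hev : ∀ ω : Fin N → Fin (2 ^ F),
      ((obs g fd d ∅ (∅ : Finset (Fin K)) true ω).2.2).getD (fd d (Classical.arbitrary _))
        = fd d ω := by
    intro ω
    simp [obs]
  have hx : fd d ω₁ = fd d ω₂ := by
    rw [hev ω₁, hev ω₂] at heq
    exact heq
  rw [obs_eq_iff]
  exact ⟨by simp, by simp, fun _ => hx⟩

end App2
end CC

namespace CC
section App3
variable {N K F : ℕ} {V : Fin K → Type} [∀ k, Fintype (V k)] {𝒳 : Type} [Fintype 𝒳]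
variable (g : ∀ k : Fin K, (Fin N → Fin (2 ^ F)) → V k)
variable (fd : (Fin K → Fin N) → (Fin N → Fin (2 ^ F)) → 𝒳)

lemma EH_empty (d : Fin K → Fin N) : EH g fd d ∅ ∅ false = 0 := by
  rw [EH_messages]
  simp

/-- conditioning on more reduces conditional entropy -/
lemma EH_cond_reduce (d : Fin K → Fin N) (T₁ : Finset (Fin N)) (U₁ : Finset (Fin K)) (b₁ : Bool)
    {T₂ T₃ : Finset (Fin N)} {U₂ U₃ : Finset (Fin K)} {b₂ b₃ : Bool}
    (hT : T₂ ⊆ T₃) (hU : U₂ ⊆ U₃) (hb : b₂ = true → b₃ = true) :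
    EH g fd d (T₁ ∪ T₃) (U₁ ∪ U₃) (b₁ || b₃) - EH g fd d T₃ U₃ b₃
      ≤ EH g fd d (T₁ ∪ T₂) (U₁ ∪ U₂) (b₁ || b₂) - EH g fd d T₂ U₂ b₂ := by
  have h := EH_submod g fd d T₁ T₂ T₃ U₁ U₂ U₃ b₁ b₂ b₃
  have e1 : T₂ ∪ T₃ = T₃ := Finset.union_eq_right.2 hT
  have e2 : U₂ ∪ U₃ = U₃ := Finset.union_eq_right.2 hU
  have e3 : (b₂ || b₃) = b₃ := by
    cases b₂
    · simp
    · simp [hb rfl]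
  have e4 : T₁ ∪ T₂ ∪ T₃ = T₁ ∪ T₃ := by rw [Finset.union_assoc, e1]
  have e5 : U₁ ∪ U₂ ∪ U₃ = U₁ ∪ U₃ := by rw [Finset.union_assoc, e2]
  have e6 : (b₁ || b₂ || b₃) = (b₁ || b₃) := by rw [Bool.or_assoc, e3]
  rw [e1, e2, e3, e4, e5, e6] at h
  linarith

lemma EH_cacheset (d : Fin K → Fin N) (U : Finset (Fin K)) :
    EH g fd d ∅ U false
      ≤ (Fintype.card (Fin N → Fin (2 ^ F)) : ℝ) * ∑ j ∈ U, Real.log (Fintype.card (V j)) := by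
  classical
  induction U using Finset.induction_on with
  | empty => rw [EH_empty]; simp
  | insert j U hjU IH =>
    have hsub := EH_submod g fd d ∅ ∅ ∅ {j} ∅ U false false false
    simp only [Finset.union_empty, Finset.empty_union, Bool.or_self, Bool.or_false] at hsub
    rw [EH_empty] at hsub
    have hins : {j} ∪ U = insert j U := rfl
    rw [hins] at hsub
    have h1 := EH_cache_single g fd d j
    rw [Finset.sum_insert hjU, mul_add]
    linarith

/-- key superadditivity step for the greedy choice -/
lemma EH_superadd (d : Fin K → Fin N) (A : Finset (Fin N)) (U : Finset (Fin K))
    (R : Finset (Fin N)) (hdisj : ∀ i ∈ R, i ∉ A) :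
    ∑ i ∈ R, ((Fintype.card (Fin N → Fin (2 ^ F)) : ℝ) * ((F : ℝ) * Real.log 2)
        - (EH g fd d (insert i A) U false - EH g fd d A U false))
      ≤ (EH g fd d A U false - EH g fd d A ∅ false)
        - (EH g fd d (A ∪ R) U false - EH g fd d (A ∪ R) ∅ false) := by
  classical
  induction R using Finset.induction_on with
  | empty => simp
  | insert i R hiR IH =>
    have hdisjR : ∀ x ∈ R, x ∉ A := fun x hx => hdisj x (Finset.mem_insert_of_mem hx)
    have hiA : i ∉ A := hdisj i (Finset.mem_insert_self i R)
    have hiAR : i ∉ A ∪ R := by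
      simp only [Finset.mem_union, not_or]
      exact ⟨hiA, hiR⟩
    -- (a) fresh message worth F bits given A ∪ R
    have ha : (Fintype.card (Fin N → Fin (2 ^ F)) : ℝ) * ((F : ℝ) * Real.log 2)
        = EH g fd d (insert i (A ∪ R)) ∅ false - EH g fd d (A ∪ R) ∅ false := by
      rw [EH_messages, EH_messages, Finset.card_insert_of_notMem hiAR]
      push_cast
      ring
    -- (b) conditioning on more reduces
    have hb : EH g fd d (insert i (A ∪ R)) U false - EH g fd d (A ∪ R) U false
        ≤ EH g fd d (insert i A) U false - EH g fd d A U false := by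
      have h := EH_cond_reduce g fd d {i} ∅ false
        (T₂ := A) (T₃ := A ∪ R) (U₂ := U) (U₃ := U) (b₂ := false) (b₃ := false)
        Finset.subset_union_left (le_refl U) (fun h => h)
      simpa [show ∀ (X : Finset (Fin N)), {i} ∪ X = insert i X from fun _ => rfl] using h
    have hstep : (Fintype.card (Fin N → Fin (2 ^ F)) : ℝ) * ((F : ℝ) * Real.log 2)
        - (EH g fd d (insert i A) U false - EH g fd d A U false)
      ≤ (EH g fd d (A ∪ R) U false - EH g fd d (A ∪ R) ∅ false)
        - (EH g fd d (A ∪ insert i R) U false - EH g fd d (A ∪ insert i R) ∅ false) := by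
      rw [Finset.union_insert]
      linarith
    rw [Finset.sum_insert hiR]
    have := IH hdisjR
    linarith

end App3
end CC

namespace CC

/-- the first `m` users -/
def Uks (K m : ℕ) : Finset (Fin K) := Finset.univ.filter (fun u => u.val < m)

lemma mem_Uks {K m : ℕ} {u : Fin K} : u ∈ Uks K m ↔ u.val < m := by
  simp [Uks]

lemma Uks_zero (K : ℕ) : Uks K 0 = ∅ := by
  ext u; simp [mem_Uks]

lemma Uks_mono (K : ℕ) {m m' : ℕ} (h : m ≤ m') : Uks K m ⊆ Uks K m' := by
  intro u hu
  rw [mem_Uks] at *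
  omega

lemma Uks_card {K m : ℕ} (h : m ≤ K) : (Uks K m).card = m := by
  classical
  have hcb : (Uks K m).card = (Finset.range m).card := by
    refine Finset.card_bij' (fun u _ => u.val)
      (fun t ht => (⟨t, lt_of_lt_of_le (Finset.mem_range.1 ht) h⟩ : Fin K)) ?_ ?_ ?_ ?_
    · intro a ha; rw [mem_Uks] at ha; exact Finset.mem_range.2 ha
    · intro a ha; rw [mem_Uks]; exact Finset.mem_range.1 ha
    · intro a ha; rfl
    · intro a ha; rfl
  rw [hcb, Finset.card_range]

section App4
variable {N K F : ℕ} {V : Fin K → Type} [∀ k, Fintype (V k)] {𝒳 : Type} [Fintype 𝒳]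
variable (g : ∀ k : Fin K, (Fin N → Fin (2 ^ F)) → V k)
variable (fd : (Fin K → Fin N) → (Fin N → Fin (2 ^ F)) → 𝒳)

lemma EH_false_d_irrel (d d' : Fin K → Fin N) (T : Finset (Fin N)) (U : Finset (Fin K)) :
    EH g fd d T U false = EH g fd d' T U false := by
  unfold EH
  have : obs g fd d T U false = obs g fd d' T U false := by
    funext ω
    simp [obs]
  rw [this]

end App4
end CC

namespace CC

section App5
variable {N K F : ℕ} {V : Fin K → Type} [∀ k, Fintype (V k)] {𝒳 : Type} [Fintype 𝒳]
variable (g : ∀ k : Fin K, (Fin N → Fin (2 ^ F)) → V k)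
variable (fd : (Fin K → Fin N) → (Fin N → Fin (2 ^ F)) → 𝒳)

open Classical in
lemma EH_decode_set (φv : ∀ k : Fin K, (Fin K → Fin N) → 𝒳 → V k → Fin (2 ^ F))
    (hdec : ∀ (ω : Fin N → Fin (2 ^ F)) (k : Fin K) (d : Fin K → Fin N),
      φv k d (fd d ω) (g k ω) = ω (d k))
    (d : Fin K → Fin N) (U : Finset (Fin K)) (S : Finset (Fin N))
    (hS : ∀ j ∈ S, ∃ k ∈ U, d k = j) :
    EH g fd d S U true = EH g fd d ∅ U true := by
  classical
  induction S using Finset.induction_on with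
  | empty => rfl
  | insert j S hjS IH =>
    obtain ⟨k, hkU, hdk⟩ := hS j (Finset.mem_insert_self j S)
    have hS' : ∀ x ∈ S, ∃ k ∈ U, d k = x := fun x hx => hS x (Finset.mem_insert_of_mem hx)
    rw [← hdk, EH_decode g fd φv hdec d S hkU]
    exact IH hS'

end App5

open Classical in
open Fin.NatCast in
lemma main1
    (N K F : ℕ) (hN : 0 < N) (hK : 0 < K) (hF : 0 < F)
    (M : ℝ) (hM : 0 ≤ M)
    (V : Fin K → Type) [∀ k, Fintype (V k)]
    (hV : ∀ k, Fintype.card (V k) ≤ ⌊(2 : ℝ) ^ ((F : ℝ) * M)⌋₊)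
    (𝒳 : Type) [Fintype 𝒳]
    (g : ∀ k : Fin K, (Fin N → Fin (2 ^ F)) → V k)
    (f : (Fin K → Fin N) → (Fin N → Fin (2 ^ F)) → 𝒳)
    (φ : ∀ (k : Fin K), (Fin K → Fin N) → 𝒳 → V k → Fin (2 ^ F))
    (hdec : ∀ (w : Fin N → Fin (2 ^ F)) (k : Fin K) (d : Fin K → Fin N),
      φ k d (f d w) (g k w) = w (d k))
    (ℓ : ℕ) (hℓ1 : 1 ≤ ℓ) (hℓK : ℓ ≤ K) (hℓN : ℓ ≤ N) :
    (F : ℝ) * ((ℓ : ℝ) - M * (ℓ : ℝ) ^ 2 / (N : ℝ)) ≤ Real.logb 2 (Fintype.card 𝒳) := by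
  classical
  haveI : NeZero N := ⟨hN.ne'⟩
  set c0 : ℝ := (Fintype.card (Fin N → Fin (2 ^ F)) : ℝ) with hc0def
  have hc0 : (0:ℝ) < c0 := by rw [hc0def]; exact_mod_cast Fintype.card_pos
  have hlog2 : (0:ℝ) < Real.log 2 := Real.log_pos (by norm_num)
  have hNpos : (0:ℝ) < (N:ℝ) := by exact_mod_cast hN
  set i0 : Fin N := ⟨0, hN⟩ with hi0
  set d₀ : Fin K → Fin N := fun _ => i0 with hd₀
  set UU : Finset (Fin K) := Uks K ℓ with hUU
  have hVlog : ∀ j : Fin K, Real.log (Fintype.card (V j)) ≤ (F:ℝ) * M * Real.log 2 := by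
    intro j
    haveI : Nonempty (V j) := ⟨g j (fun _ => ⟨0, by positivity⟩)⟩
    have h1 : (0:ℝ) < (Fintype.card (V j) : ℝ) := by exact_mod_cast Fintype.card_pos
    have h2 : (Fintype.card (V j) : ℝ) ≤ (2:ℝ) ^ ((F:ℝ) * M) := by
      calc (Fintype.card (V j):ℝ) ≤ (⌊(2 : ℝ) ^ ((F : ℝ) * M)⌋₊ : ℝ) := by exact_mod_cast hV j
      _ ≤ (2:ℝ)^((F:ℝ)*M) := Nat.floor_le (by positivity)
    calc Real.log (Fintype.card (V j)) ≤ Real.log ((2:ℝ)^((F:ℝ)*M)) := Real.log_le_log h1 h2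
    _ = (F:ℝ)*M*Real.log 2 := by rw [Real.log_rpow (by norm_num)]
  have hcache : EH g f d₀ ∅ UU false ≤ c0 * ((ℓ:ℝ) * ((F:ℝ) * M * Real.log 2)) := by
    refine (EH_cacheset g f d₀ UU).trans ?_
    apply mul_le_mul_of_nonneg_left ?_ hc0.le
    calc ∑ j ∈ UU, Real.log (Fintype.card (V j))
        ≤ ∑ _j ∈ UU, (F:ℝ)*M*Real.log 2 := Finset.sum_le_sum (fun j _ => hVlog j)
      _ = (ℓ:ℝ) * ((F:ℝ)*M*Real.log 2) := by
          rw [Finset.sum_const, hUU, Uks_card hℓK, nsmul_eq_mul]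
  -- prefix sets and per-message conditional entropies
  set Tn : ℕ → Finset (Fin N) := fun n => univ.filter (fun j => j.val < n) with hTn
  set u : Fin N → ℝ := fun j =>
    EH g f d₀ (insert j (Tn j.val)) UU false - EH g f d₀ (Tn j.val) UU false with hu
  have hu' : ∀ j : Fin N, u j
      = EH g f d₀ (insert j (Tn j.val)) UU false - EH g f d₀ (Tn j.val) UU false :=
    fun j => rfl
  have hTn0 : Tn 0 = ∅ := by ext x; simp [hTn]
  have hTnN : Tn N = univ := by ext x; simp [hTn, x.isLt]
  have hTnmem : ∀ n (j : Fin N), j ∈ Tn n ↔ j.val < n := by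
    intro n j; simp [hTn]
  have hTnsucc : ∀ n (hn : n < N), Tn (n+1) = insert (⟨n, hn⟩ : Fin N) (Tn n) := by
    intro n hn
    ext x
    simp only [hTn, Finset.mem_filter, Finset.mem_univ, true_and, Finset.mem_insert]
    have hxeq : (x = (⟨n, hn⟩ : Fin N)) ↔ (x.val = n) := by
      constructor
      · intro h; rw [h]
      · intro h; exact Fin.ext h
    rw [hxeq]
    omega
  -- (i) chain rule equality
  have hchainEq : ∀ n, n ≤ N →
      EH g f d₀ (Tn n) UU false - EH g f d₀ ∅ UU false = ∑ j ∈ Tn n, u j := by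
    intro n
    induction n with
    | zero => intro _; rw [hTn0]; simp
    | succ n IH =>
      intro hn1
      have hn : n < N := by omega
      have hjn : (⟨n, hn⟩ : Fin N) ∉ Tn n := by
        rw [hTnmem]; simp
      rw [hTnsucc n hn, Finset.sum_insert hjn, ← IH (by omega), hu' ⟨n, hn⟩]
      have hval : Tn ((⟨n, hn⟩ : Fin N)).val = Tn n := rfl
      rw [hval]
      ring
  -- (ii) per-subset lower bound
  have hsubset : ∀ n, ∀ S : Finset (Fin N), (∀ j ∈ S, j.val < n) →
      ∑ j ∈ S, u j ≤ EH g f d₀ S UU false - EH g f d₀ ∅ UU false := by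
    intro n
    induction n with
    | zero =>
      intro S hS
      have : S = ∅ := Finset.eq_empty_of_forall_notMem (fun x hx => by
        have := hS x hx; omega)
      subst this
      simp
    | succ n IH =>
      intro S hS
      by_cases hall : ∀ j ∈ S, j.val < n
      · exact IH S hall
      · push_neg at hall
        obtain ⟨j0, hj0S, hj0n⟩ := hall
        have hj0val : j0.val = n := by have := hS j0 hj0S; omega
        set S' : Finset (Fin N) := S.erase j0 with hS'
        have hSins : S = insert j0 S' := by rw [hS', Finset.insert_erase hj0S]
        have hj0S' : j0 ∉ S' := Finset.notMem_erase j0 S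
        have hS'lt : ∀ x ∈ S', x.val < n := by
          intro x hx
          have hxS : x ∈ S := Finset.mem_of_mem_erase hx
          have hxne : x ≠ j0 := Finset.ne_of_mem_erase hx
          have := hS x hxS
          rcases Nat.lt_succ_iff_lt_or_eq.1 this with h | h
          · exact h
          · exact absurd (Fin.ext (h.trans hj0val.symm)) hxne
        have hsub : S' ⊆ Tn n := by
          intro x hx; rw [hTnmem]; exact hS'lt x hx
        have hstep : u j0 ≤ EH g f d₀ (insert j0 S') UU false - EH g f d₀ S' UU false := by
          have h := EH_cond_reduce g f d₀ {j0} ∅ false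
            (T₂ := S') (T₃ := Tn n) (U₂ := UU) (U₃ := UU) (b₂ := false) (b₃ := false)
            hsub (le_refl _) (fun h => h)
          have hj0T : Tn j0.val = Tn n := by rw [hj0val]
          rw [hu' j0, hj0T]
          simp only [Finset.union_self, Finset.empty_union, Bool.or_self] at h
          have e1 : ({j0} : Finset (Fin N)) ∪ S' = insert j0 S' := rfl
          have e2 : ({j0} : Finset (Fin N)) ∪ Tn n = insert j0 (Tn n) := rfl
          rw [e1, e2] at h
          linarith
        have hIH := IH S' hS'lt
        rw [hSins, Finset.sum_insert hj0S']
        linarith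
  -- total information in all messages
  have hTotal : c0 * ((N:ℝ) * ((F:ℝ) * Real.log 2)) - c0 * ((ℓ:ℝ) * ((F:ℝ) * M * Real.log 2))
      ≤ ∑ j ∈ univ, u j := by
    have h1 := hchainEq N (le_refl N)
    rw [hTnN] at h1
    have h2 : EH g f d₀ (univ : Finset (Fin N)) ∅ false ≤ EH g f d₀ univ UU false :=
      EH_mono g f d₀ (le_refl _) (Finset.empty_subset _) (fun h => h)
    have h3 : EH g f d₀ (univ : Finset (Fin N)) ∅ false
        = c0 * ((N:ℝ) * ((F:ℝ) * Real.log 2)) := by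
      rw [EH_messages]
      congr 2
      simp [Fintype.card_fin]
    rw [← h1]
    linarith [hcache]
  -- cyclic windows
  set win : Fin N → Finset (Fin N) :=
    fun i => (Finset.range ℓ).image (fun (t : ℕ) => i + (t : Fin N)) with hwin
  have hcastinj : ∀ t₁ ∈ Finset.range ℓ, ∀ t₂ ∈ Finset.range ℓ,
      ((t₁ : Fin N)) = (t₂ : Fin N) → t₁ = t₂ := by
    intro t₁ h₁ t₂ h₂ h
    have e1 : ((t₁ : Fin N)).val = t₁ := Fin.val_cast_of_lt (by
      have := Finset.mem_range.1 h₁; omega)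
    have e2 : ((t₂ : Fin N)).val = t₂ := Fin.val_cast_of_lt (by
      have := Finset.mem_range.1 h₂; omega)
    rw [← e1, ← e2, h]
  have hwincard : ∀ i, (win i).card = ℓ := by
    intro i
    rw [hwin]
    rw [Finset.card_image_of_injOn]
    · exact Finset.card_range ℓ
    · intro t₁ h₁ t₂ h₂ h
      exact hcastinj t₁ h₁ t₂ h₂ (add_left_cancel h)
  have hwinmem : ∀ i j, j ∈ win i ↔ ∃ t < ℓ, j = i + (t : Fin N) := by
    intro i j
    rw [hwin]
    simp only [Finset.mem_image, Finset.mem_range]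
    constructor
    · rintro ⟨t, ht, rfl⟩; exact ⟨t, ht, rfl⟩
    · rintro ⟨t, ht, rfl⟩; exact ⟨t, ht, rfl⟩
  have hcovcard : ∀ j, (univ.filter (fun i => j ∈ win i)).card = ℓ := by
    intro j
    have hset : univ.filter (fun i => j ∈ win i)
        = (Finset.range ℓ).image (fun (t : ℕ) => j - (t : Fin N)) := by
      ext i
      simp only [Finset.mem_filter, Finset.mem_univ, true_and, Finset.mem_image,
        Finset.mem_range, hwinmem]
      constructor
      · rintro ⟨t, ht, rfl⟩
        exact ⟨t, ht, add_sub_cancel_right i ((t : Fin N))⟩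
      · rintro ⟨t, ht, rfl⟩
        exact ⟨t, ht, (sub_add_cancel j ((t : Fin N))).symm⟩
    rw [hset, Finset.card_image_of_injOn]
    · exact Finset.card_range ℓ
    · intro t₁ h₁ t₂ h₂ h
      exact hcastinj t₁ h₁ t₂ h₂ (sub_right_injective h)
  -- double counting
  have hdouble : ∑ i ∈ univ, ∑ j ∈ win i, u j = (ℓ:ℝ) * ∑ j ∈ univ, u j := by
    have h1 : ∀ i, ∑ j ∈ win i, u j = ∑ j ∈ univ, (if j ∈ win i then u j else 0) := by
      intro i
      rw [Finset.sum_ite_mem, Finset.univ_inter]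
    rw [Finset.sum_congr rfl (fun i _ => h1 i), Finset.sum_comm]
    rw [Finset.mul_sum]
    apply Finset.sum_congr rfl
    intro j _
    rw [Finset.sum_ite, Finset.sum_const, Finset.sum_const_zero, add_zero, nsmul_eq_mul,
      hcovcard j, mul_comm]
  -- pigeonhole: a good window
  have hune : (univ : Finset (Fin N)).Nonempty := ⟨i0, Finset.mem_univ i0⟩
  have hpig : ∃ i, ((ℓ:ℝ)/(N:ℝ)) * ∑ j ∈ univ, u j ≤ ∑ j ∈ win i, u j := by
    have hsum : ∑ _i ∈ (univ : Finset (Fin N)), ((ℓ:ℝ)/(N:ℝ)) * ∑ j ∈ univ, u j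
        ≤ ∑ i ∈ univ, ∑ j ∈ win i, u j := by
      rw [hdouble, Finset.sum_const, Finset.card_univ, Fintype.card_fin, nsmul_eq_mul]
      rw [show (N:ℝ) * (((ℓ:ℝ)/(N:ℝ)) * ∑ j ∈ univ, u j) = (ℓ:ℝ) * ∑ j ∈ univ, u j from by
        field_simp]
    obtain ⟨i, -, hi⟩ := Finset.exists_le_of_sum_le hune hsum
    exact ⟨i, hi⟩
  obtain ⟨iw, hiw⟩ := hpig
  -- the demand vector for this window
  set d : Fin K → Fin N :=
    (fun k => if h : k.val < ℓ then iw + ((k.val : ℕ) : Fin N) else iw) with hd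
  have hdecset : EH g f d (win iw) UU true = EH g f d ∅ UU true := by
    apply EH_decode_set g f φ hdec
    intro j hj
    obtain ⟨t, ht, rfl⟩ := (hwinmem iw j).1 hj
    refine ⟨⟨t, lt_of_lt_of_le ht hℓK⟩, ?_, ?_⟩
    · rw [hUU, mem_Uks]; exact ht
    · rw [hd]; exact dif_pos ht
  -- assemble
  have hstep1 : EH g f d (win iw) UU false ≤ EH g f d (win iw) UU true :=
    EH_mono g f d (le_refl _) (le_refl _) (fun h => by simp at h)
  have hstep2 : EH g f d ∅ UU true ≤ EH g f d ∅ UU false + EH g f d ∅ ∅ true := by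
    have h := EH_submod g f d ∅ ∅ ∅ UU ∅ ∅ false false true
    simp only [Finset.union_empty, Finset.empty_union, Finset.union_self,
      Bool.or_self, Bool.or_false, Bool.false_or] at h
    rw [EH_empty] at h
    linarith
  have hwinlow : ∑ j ∈ win iw, u j
      ≤ EH g f d₀ (win iw) UU false - EH g f d₀ ∅ UU false :=
    hsubset N (win iw) (fun j _ => j.isLt)
  have hX := EH_X g f d
  have hbig : ((ℓ:ℝ)/(N:ℝ)) * (c0 * ((N:ℝ) * ((F:ℝ) * Real.log 2))
        - c0 * ((ℓ:ℝ) * ((F:ℝ) * M * Real.log 2)))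
      ≤ c0 * Real.log (Fintype.card 𝒳) := by
    have hfrac : (0:ℝ) ≤ (ℓ:ℝ)/(N:ℝ) := by positivity
    have h1 : ((ℓ:ℝ)/(N:ℝ)) * (c0 * ((N:ℝ) * ((F:ℝ) * Real.log 2))
          - c0 * ((ℓ:ℝ) * ((F:ℝ) * M * Real.log 2)))
        ≤ ((ℓ:ℝ)/(N:ℝ)) * ∑ j ∈ univ, u j :=
      mul_le_mul_of_nonneg_left hTotal hfrac
    have h2 : EH g f d₀ (win iw) UU false = EH g f d (win iw) UU false :=
      EH_false_d_irrel g f d₀ d _ _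
    have h3 : EH g f d₀ ∅ UU false = EH g f d ∅ UU false :=
      EH_false_d_irrel g f d₀ d _ _
    rw [h2, h3] at hwinlow
    linarith [hiw, hwinlow, hstep1, hstep2, hdecset, hX]
  -- final arithmetic
  have hdiv : ((ℓ:ℝ)/(N:ℝ)) * ((N:ℝ) * ((F:ℝ) * Real.log 2)
        - (ℓ:ℝ) * ((F:ℝ) * M * Real.log 2))
      ≤ Real.log (Fintype.card 𝒳) := by
    have hrw : ((ℓ:ℝ)/(N:ℝ)) * (c0 * ((N:ℝ) * ((F:ℝ) * Real.log 2))
          - c0 * ((ℓ:ℝ) * ((F:ℝ) * M * Real.log 2)))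
        = c0 * (((ℓ:ℝ)/(N:ℝ)) * ((N:ℝ) * ((F:ℝ) * Real.log 2)
          - (ℓ:ℝ) * ((F:ℝ) * M * Real.log 2))) := by ring
    rw [hrw] at hbig
    exact le_of_mul_le_mul_left hbig hc0
  rw [Real.logb, le_div_iff₀ hlog2]
  have hexp : (F:ℝ) * ((ℓ:ℝ) - M * (ℓ:ℝ)^2 / (N:ℝ)) * Real.log 2
      = ((ℓ:ℝ)/(N:ℝ)) * ((N:ℝ) * ((F:ℝ) * Real.log 2)
        - (ℓ:ℝ) * ((F:ℝ) * M * Real.log 2)) := by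
    field_simp
  rw [hexp]
  exact hdiv
end CC

namespace CC
open Classical in
lemma main2
    (N K F : ℕ) (hN : 0 < N) (hK : 0 < K) (hF : 0 < F)
    (M : ℝ) (hM : 0 ≤ M)
    (V : Fin K → Type) [∀ k, Fintype (V k)]
    (hV : ∀ k, Fintype.card (V k) ≤ ⌊(2 : ℝ) ^ ((F : ℝ) * M)⌋₊)
    (𝒳 : Type) [Fintype 𝒳]
    (g : ∀ k : Fin K, (Fin N → Fin (2 ^ F)) → V k)
    (f : (Fin K → Fin N) → (Fin N → Fin (2 ^ F)) → 𝒳)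
    (φ : ∀ (k : Fin K), (Fin K → Fin N) → 𝒳 → V k → Fin (2 ^ F))
    (hdec : ∀ (w : Fin N → Fin (2 ^ F)) (k : Fin K) (d : Fin K → Fin N),
      φ k d (f d w) (g k w) = w (d k))
    (ℓ : ℕ) (hℓ1 : 1 ≤ ℓ) (hℓK : ℓ ≤ K) (hℓN : ℓ ≤ N) :
    (F : ℝ) * ((ℓ : ℝ) - M * ∑ k ∈ Finset.Icc 1 ℓ, (k : ℝ) / ((N : ℝ) - (k : ℝ) + 1))
      ≤ Real.logb 2 (Fintype.card 𝒳) := by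
  classical
  set c0 : ℝ := (Fintype.card (Fin N → Fin (2 ^ F)) : ℝ) with hc0def
  have hc0 : (0:ℝ) < c0 := by rw [hc0def]; exact_mod_cast Fintype.card_pos
  have hlog2 : (0:ℝ) < Real.log 2 := Real.log_pos (by norm_num)
  set i0 : Fin N := ⟨0, hN⟩ with hi0
  set d₀ : Fin K → Fin N := fun _ => i0 with hd₀
  have hVlog : ∀ j : Fin K, Real.log (Fintype.card (V j)) ≤ (F:ℝ) * M * Real.log 2 := by
    intro j
    haveI : Nonempty (V j) := ⟨g j (fun _ => ⟨0, by positivity⟩)⟩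
    have h1 : (0:ℝ) < (Fintype.card (V j) : ℝ) := by exact_mod_cast Fintype.card_pos
    have h2 : (Fintype.card (V j) : ℝ) ≤ (2:ℝ) ^ ((F:ℝ) * M) := by
      calc (Fintype.card (V j):ℝ) ≤ (⌊(2 : ℝ) ^ ((F : ℝ) * M)⌋₊ : ℝ) := by exact_mod_cast hV j
      _ ≤ (2:ℝ)^((F:ℝ)*M) := Nat.floor_le (by positivity)
    calc Real.log (Fintype.card (V j)) ≤ Real.log ((2:ℝ)^((F:ℝ)*M)) := Real.log_le_log h1 h2
    _ = (F:ℝ)*M*Real.log 2 := by rw [Real.log_rpow (by norm_num)]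
  have hcacheU : ∀ m : ℕ, m ≤ K → ∀ d : Fin K → Fin N,
      EH g f d ∅ (Uks K m) false ≤ c0 * ((m:ℝ) * ((F:ℝ) * M * Real.log 2)) := by
    intro m hm d
    refine (EH_cacheset g f d (Uks K m)).trans ?_
    apply mul_le_mul_of_nonneg_left ?_ hc0.le
    calc ∑ j ∈ Uks K m, Real.log (Fintype.card (V j))
        ≤ ∑ _j ∈ Uks K m, (F:ℝ)*M*Real.log 2 := Finset.sum_le_sum (fun j _ => hVlog j)
      _ = (m:ℝ) * ((F:ℝ)*M*Real.log 2) := by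
          rw [Finset.sum_const, Uks_card hm, nsmul_eq_mul]
  -- greedy construction of the demanded messages
  have greedy : ∀ m : ℕ, m ≤ ℓ → ∃ s : List (Fin N), s.length = m ∧ s.Nodup ∧
      ∀ j : ℕ, j < m →
        c0 * ((F:ℝ) * Real.log 2)
          - (EH g f d₀ ((s.take (j+1)).toFinset) (Uks K (j+1)) false
              - EH g f d₀ ((s.take j).toFinset) (Uks K (j+1)) false)
        ≤ c0 * (((j:ℝ)+1) * ((F:ℝ) * M * Real.log 2)) / ((N:ℝ) - (j:ℝ)) := by
    intro m
    induction m with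
    | zero => exact fun _ => ⟨[], rfl, List.nodup_nil, fun j hj => absurd hj (by omega)⟩
    | succ m IH =>
      intro hm1
      obtain ⟨s, hlen, hnd, hprop⟩ := IH (by omega)
      have hmN : m < N := by omega
      have hAcard : s.toFinset.card = m := by rw [List.toFinset_card_of_nodup hnd, hlen]
      have hRA : ∀ i ∈ s.toFinsetᶜ, i ∉ s.toFinset := fun i hi => Finset.mem_compl.1 hi
      have hsuper := EH_superadd g f d₀ s.toFinset (Uks K (m+1)) s.toFinsetᶜ hRA
      have hmono1 : EH g f d₀ (s.toFinset ∪ s.toFinsetᶜ) ∅ false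
          ≤ EH g f d₀ (s.toFinset ∪ s.toFinsetᶜ) (Uks K (m+1)) false :=
        EH_mono g f d₀ (le_refl _) (Finset.empty_subset _) (fun h => h)
      have hcond : EH g f d₀ s.toFinset (Uks K (m+1)) false - EH g f d₀ s.toFinset ∅ false
          ≤ EH g f d₀ ∅ (Uks K (m+1)) false := by
        have h := EH_cond_reduce g f d₀ s.toFinset ∅ false
          (T₂ := ∅) (T₃ := ∅) (U₂ := ∅) (U₃ := Uks K (m+1)) (b₂ := false) (b₃ := false)
          (le_refl _) (Finset.empty_subset _) (fun h => h)
        simp only [Finset.union_empty, Finset.empty_union, Bool.or_self] at h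
        rw [EH_empty] at h
        linarith
      have hsum_le : ∑ i ∈ s.toFinsetᶜ, (c0 * ((F:ℝ) * Real.log 2)
            - (EH g f d₀ (insert i s.toFinset) (Uks K (m+1)) false
                - EH g f d₀ s.toFinset (Uks K (m+1)) false))
          ≤ c0 * (((m:ℝ)+1) * ((F:ℝ)*M*Real.log 2)) := by
        refine hsuper.trans ?_
        have h2 := hcacheU (m+1) (by omega) d₀
        push_cast at h2
        linarith [hmono1, hcond]
      have hRcard : (s.toFinsetᶜ).card = N - m := by
        rw [Finset.card_compl, hAcard, Fintype.card_fin]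
      have hRne : (s.toFinsetᶜ).Nonempty := by
        rw [← Finset.card_pos, hRcard]; omega
      have hNm : (0:ℝ) < (N:ℝ) - (m:ℝ) := by
        have : (m:ℝ) < (N:ℝ) := by exact_mod_cast hmN
        linarith
      have hconst_sum : ∑ _i ∈ s.toFinsetᶜ,
            (c0 * (((m:ℝ)+1) * ((F:ℝ)*M*Real.log 2)) / ((N:ℝ) - (m:ℝ)))
          = c0 * (((m:ℝ)+1) * ((F:ℝ)*M*Real.log 2)) := by
        rw [Finset.sum_const, hRcard, nsmul_eq_mul, Nat.cast_sub (le_of_lt hmN)]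
        field_simp
      have hex := Finset.exists_le_of_sum_le hRne (hsum_le.trans_eq hconst_sum.symm)
      obtain ⟨i, hiR, hile⟩ := hex
      refine ⟨s ++ [i], by simp [hlen], ?_, ?_⟩
      · rw [List.nodup_append]
        refine ⟨hnd, List.nodup_singleton i, ?_⟩
        intro a ha b hai hab
        rw [List.mem_singleton] at hai
        subst hai
        subst hab
        exact (Finset.mem_compl.1 hiR) (List.mem_toFinset.2 ha)
      · intro j hj
        by_cases hjm : j < m
        · have e1 : (s ++ [i]).take (j+1) = s.take (j+1) :=
            List.take_append_of_le_length (by omega)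
          have e2 : (s ++ [i]).take j = s.take j :=
            List.take_append_of_le_length (by omega)
          rw [e1, e2]
          exact hprop j hjm
        · have hjm' : j = m := by omega
          subst hjm'
          have e1 : (s ++ [i]).take j = s := by
            rw [List.take_append_of_le_length (by omega)]
            rw [← hlen, List.take_length]
          have e2 : (s ++ [i]).take (j+1) = s ++ [i] := by
            apply List.take_of_length_le
            simp [hlen]
          have e3 : (s ++ [i]).toFinset = insert i s.toFinset := by
            rw [List.toFinset_append]
            ext x
            simp [or_comm]
          rw [e1, e2, e3]
          exact_mod_cast hile
  obtain ⟨s, hlen, hnd, hprop⟩ := greedy ℓ (le_refl ℓ)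
  have hlpos : 0 < s.length := by rw [hlen]; omega
  set d : Fin K → Fin N :=
    (fun u => if h : u.val < ℓ then s.get ⟨u.val, by rw [hlen]; exact h⟩ else s.get ⟨0, hlpos⟩)
    with hd
  -- downward chain extracting the delivery symbol's information
  have chain : ∀ n : ℕ, ∀ m : ℕ, m + n = ℓ →
      ∑ j ∈ Finset.Ico m ℓ,
        (EH g f d ((s.take (j+1)).toFinset) (Uks K (j+1)) false
          - EH g f d ((s.take j).toFinset) (Uks K (j+1)) false)
      ≤ EH g f d ((s.take m).toFinset) (Uks K m) true
          - EH g f d ((s.take m).toFinset) (Uks K m) false := by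
    intro n
    induction n with
    | zero =>
      intro m hm
      have hmeq : m = ℓ := by omega
      subst hmeq
      rw [Finset.Ico_self, Finset.sum_empty]
      have := EH_mono g f d (T := (s.take m).toFinset) (T' := (s.take m).toFinset)
        (U := Uks K m) (U' := Uks K m) (b := false) (b' := true)
        (le_refl _) (le_refl _) (fun h => by simp at h)
      linarith
    | succ n IHn =>
      intro m hm
      have hmℓ : m < ℓ := by omega
      have hIH := IHn (m+1) (by omega)
      have hmK : m < K := by omega
      have hmlen : m < s.length := by omega
      set k : Fin K := ⟨m, hmK⟩ with hk
      have hdk : d k = s.get ⟨m, hmlen⟩ := by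
        rw [hd]
        exact dif_pos hmℓ
      have hkU : k ∈ Uks K (m+1) := mem_Uks.2 (by simp [hk])
      have hdecode := EH_decode g f φ hdec d ((s.take m).toFinset) (U := Uks K (m+1)) (k := k) hkU
      have e3 : insert (d k) ((s.take m).toFinset) = (s.take (m+1)).toFinset := by
        rw [hdk]
        have hc : (s.take m).concat (s.get ⟨m, hmlen⟩) = s.take (m+1) :=
          List.take_concat_get hmlen
        rw [← hc, List.concat_eq_append, List.toFinset_append]
        ext x
        simp [or_comm]
      have hcondm : EH g f d ((s.take m).toFinset) (Uks K (m+1)) true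
            - EH g f d ((s.take m).toFinset) (Uks K (m+1)) false
          ≤ EH g f d ((s.take m).toFinset) (Uks K m) true
            - EH g f d ((s.take m).toFinset) (Uks K m) false := by
        have h := EH_cond_reduce g f d ∅ ∅ true
          (T₂ := (s.take m).toFinset) (T₃ := (s.take m).toFinset)
          (U₂ := Uks K m) (U₃ := Uks K (m+1)) (b₂ := false) (b₃ := false)
          (le_refl _) (Uks_mono K (by omega)) (fun h => h)
        simpa using h
      have hkey : EH g f d ((s.take m).toFinset) (Uks K (m+1)) true
          = EH g f d ((s.take (m+1)).toFinset) (Uks K (m+1)) true := by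
        rw [← e3]
        exact hdecode.symm
      rw [Finset.sum_eq_sum_Ico_succ_bot hmℓ]
      linarith [hIH, hcondm, hkey]
  have hchain0 := chain ℓ 0 (by omega)
  have h0 : ((s.take 0).toFinset : Finset (Fin N)) = ∅ := by simp
  rw [h0, Uks_zero, EH_empty, sub_zero] at hchain0
  -- per-step lower bound with the real demand d
  have hperj : ∀ j ∈ Finset.Ico 0 ℓ, c0 * ((F:ℝ)*Real.log 2)
      ≤ (EH g f d ((s.take (j+1)).toFinset) (Uks K (j+1)) false
          - EH g f d ((s.take j).toFinset) (Uks K (j+1)) false)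
        + c0 * (((j:ℝ)+1)*((F:ℝ)*M*Real.log 2)) / ((N:ℝ)-(j:ℝ)) := by
    intro j hj
    have hjl : j < ℓ := (Finset.mem_Ico.1 hj).2
    have hp := hprop j hjl
    rw [EH_false_d_irrel g f d₀ d ((s.take (j+1)).toFinset) (Uks K (j+1)),
      EH_false_d_irrel g f d₀ d ((s.take j).toFinset) (Uks K (j+1))] at hp
    linarith
  have hX := EH_X g f d
  have hsumall : (ℓ:ℝ) * (c0 * ((F:ℝ)*Real.log 2))
      ≤ c0 * Real.log (Fintype.card 𝒳)
        + ∑ j ∈ Finset.Ico 0 ℓ, c0*(((j:ℝ)+1)*((F:ℝ)*M*Real.log 2))/((N:ℝ)-(j:ℝ)) := by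
    have h1 : ∑ _j ∈ Finset.Ico 0 ℓ, c0 * ((F:ℝ)*Real.log 2)
        = (ℓ:ℝ) * (c0 * ((F:ℝ)*Real.log 2)) := by
      rw [Finset.sum_const, Nat.card_Ico, Nat.sub_zero, nsmul_eq_mul]
    have h2 : ∑ j ∈ Finset.Ico 0 ℓ, (c0 * ((F:ℝ)*Real.log 2)) ≤
        ∑ j ∈ Finset.Ico 0 ℓ,
          ((EH g f d ((s.take (j+1)).toFinset) (Uks K (j+1)) false
            - EH g f d ((s.take j).toFinset) (Uks K (j+1)) false)
          + c0 * (((j:ℝ)+1)*((F:ℝ)*M*Real.log 2)) / ((N:ℝ)-(j:ℝ))) :=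
      Finset.sum_le_sum hperj
    rw [Finset.sum_add_distrib, h1] at h2
    linarith [hchain0, hX]
  -- reindex the harmonic sum
  have hSsum : ∑ j ∈ Finset.Ico 0 ℓ, c0*(((j:ℝ)+1)*((F:ℝ)*M*Real.log 2))/((N:ℝ)-(j:ℝ))
      = c0 * ((F:ℝ)*M*Real.log 2) * ∑ k ∈ Finset.Icc 1 ℓ, (k : ℝ) / ((N : ℝ) - (k : ℝ) + 1) := by
    rw [Finset.mul_sum]
    have hIco : Finset.Ico 0 ℓ = Finset.range ℓ := by rw [Finset.range_eq_Ico]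
    rw [hIco, ← Finset.Ico_add_one_right_eq_Icc, Finset.sum_Ico_eq_sum_range, Nat.add_sub_cancel]
    apply Finset.sum_congr rfl
    intro j hj
    push_cast
    have hden : (N:ℝ) - (1 + (j:ℝ)) + 1 = (N:ℝ) - (j:ℝ) := by ring
    rw [hden]
    ring
  have final : (ℓ:ℝ) * (c0 * ((F:ℝ)*Real.log 2))
      ≤ c0 * Real.log (Fintype.card 𝒳)
        + c0 * ((F:ℝ)*M*Real.log 2) * ∑ k ∈ Finset.Icc 1 ℓ, (k : ℝ) / ((N : ℝ) - (k : ℝ) + 1) := by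
    rw [← hSsum]; exact hsumall
  have hdiv : (ℓ:ℝ) * ((F:ℝ)*Real.log 2)
      ≤ Real.log (Fintype.card 𝒳)
        + (F:ℝ)*M*Real.log 2 * ∑ k ∈ Finset.Icc 1 ℓ, (k : ℝ) / ((N : ℝ) - (k : ℝ) + 1) := by
    have hrw : (ℓ:ℝ) * (c0 * ((F:ℝ)*Real.log 2)) = c0 * ((ℓ:ℝ) * ((F:ℝ)*Real.log 2)) := by ring
    have hrw2 : c0 * Real.log (Fintype.card 𝒳)
          + c0 * ((F:ℝ)*M*Real.log 2) * ∑ k ∈ Finset.Icc 1 ℓ, (k : ℝ) / ((N : ℝ) - (k : ℝ) + 1)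
        = c0 * (Real.log (Fintype.card 𝒳)
          + (F:ℝ)*M*Real.log 2 * ∑ k ∈ Finset.Icc 1 ℓ, (k : ℝ) / ((N : ℝ) - (k : ℝ) + 1)) := by ring
    rw [hrw, hrw2] at final
    exact le_of_mul_le_mul_left final hc0
  rw [Real.logb, le_div_iff₀ hlog2]
  have hexp : (F:ℝ) * ((ℓ:ℝ) - M * ∑ k ∈ Finset.Icc 1 ℓ, (k : ℝ) / ((N : ℝ) - (k : ℝ) + 1)) * Real.log 2
      = (ℓ:ℝ)*((F:ℝ)*Real.log 2)
        - (F:ℝ)*M*Real.log 2 * ∑ k ∈ Finset.Icc 1 ℓ, (k : ℝ) / ((N : ℝ) - (k : ℝ) + 1) := by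
    ring
  rw [hexp]
  linarith [hdiv]
end CC


/-- **Finite-blocklength worst-case converse (Theorem 1).**
For any zero-error coded caching scheme with a common delivery alphabet `𝒳`,
for every `ℓ ∈ {1,…,min(K,N)}`:
`log₂|𝒳| ≥ F·(ℓ − M·ℓ²/N)` and `log₂|𝒳| ≥ F·(ℓ − M·∑_{k=1}^{ℓ} k/(N−k+1))`. -/
theorem worst_case_converse
    (N K F : ℕ) (hN : 0 < N) (hK : 0 < K) (hF : 0 < F)
    (M : ℝ) (hM : 0 ≤ M)
    (V : Fin K → Type) [∀ k, Fintype (V k)]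
    (hV : ∀ k, Fintype.card (V k) ≤ ⌊(2 : ℝ) ^ ((F : ℝ) * M)⌋₊)
    (𝒳 : Type) [Fintype 𝒳]
    (g : ∀ k : Fin K, (Fin N → Fin (2 ^ F)) → V k)
    (f : (Fin K → Fin N) → (Fin N → Fin (2 ^ F)) → 𝒳)
    (φ : ∀ (k : Fin K), (Fin K → Fin N) → 𝒳 → V k → Fin (2 ^ F))
    (hdec : ∀ (w : Fin N → Fin (2 ^ F)) (k : Fin K) (d : Fin K → Fin N),
      φ k d (f d w) (g k w) = w (d k))
    (ℓ : ℕ) (hℓ1 : 1 ≤ ℓ) (hℓ2 : ℓ ≤ min K N) :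
    (F : ℝ) * ((ℓ : ℝ) - M * (ℓ : ℝ) ^ 2 / (N : ℝ)) ≤ Real.logb 2 (Fintype.card 𝒳)
    ∧ (F : ℝ) * ((ℓ : ℝ) - M * ∑ k ∈ Finset.Icc 1 ℓ, (k : ℝ) / ((N : ℝ) - (k : ℝ) + 1))
        ≤ Real.logb 2 (Fintype.card 𝒳) := by
  have hℓK : ℓ ≤ K := hℓ2.trans (min_le_left K N)
  have hℓN : ℓ ≤ N := hℓ2.trans (min_le_right K N)
  exact ⟨CC.main1 N K F hN hK hF M hM V hV 𝒳 g f φ hdec ℓ hℓ1 hℓK hℓN,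
    CC.main2 N K F hN hK hF M hM V hV 𝒳 g f φ hdec ℓ hℓ1 hℓK hℓN⟩
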